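/- Let n ≥ 2. The set Der(L_n) of all (⊙,∨)-derivations on the n-element MV-chain L_n, partially ordered pointwise (d ⪯ d′ iff d(a) ≤ d′(a) for all a), is order-isomorphic to the set A(L_n) = {(x,y) ∈ L_n × L_n : y ≤ x} \ {(0,0)} equipped with the componentwise order; an order isomorphism is given by (x,y) ↦ (d_x)^y, where (d_x)^y(z) = y if z = n−1 and (d_x)^y(z) = x ⊙ z otherwise. In particular Der(L_n) is a lattice. -/

import Mathlib

/-- Łukasiewicz conjunction on the n-element MV-chain modeled on `Fin n`:
`a ⊙ b = (a + b) ∸ (n - 1)` (truncated subtraction). -/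
def codot {n : ℕ} (a b : Fin n) : Fin n :=
  ⟨a.1 + b.1 - (n - 1), by have ha := a.2; have hb := b.2; omega⟩

/-- `d` is an `(⊙,∨)`-derivation on the MV-chain `Fin n`:
`d (a ⊙ b) = (d a ⊙ b) ∨ (a ⊙ d b)` for all `a, b`. -/
def IsChainDer {n : ℕ} (d : Fin n → Fin n) : Prop :=
  ∀ a b : Fin n, d (codot a b) = max (codot (d a) b) (codot a (d b))

/-- The map (d_x)^y on Fin n: sends the top element n-1 to y and every
other z to x ⊙ z. -/
def dxy {n : ℕ} (hn : 2 ≤ n) (p : Fin n × Fin n) : Fin n → Fin n :=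
  fun z => if z = (⟨n - 1, by omega⟩ : Fin n) then p.2 else codot p.1 z

namespace Stmt18Aux

lemma val_max {n : ℕ} (a b : Fin n) : (max a b).1 = max a.1 b.1 := by
  rcases le_total a b with h | h
  · rw [max_eq_right h, max_eq_right (Fin.le_def.mp h)]
  · rw [max_eq_left h, max_eq_left (Fin.le_def.mp h)]

lemma dxy_val {n : ℕ} (hn : 2 ≤ n) (p : Fin n × Fin n) (z : Fin n) :
    (dxy hn p z).1 = if z.1 = n - 1 then p.2.1 else p.1.1 + z.1 - (n - 1) := by
  rcases eq_or_ne z.1 (n - 1) with h | h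
  · have hz : z = (⟨n - 1, by omega⟩ : Fin n) := Fin.ext h
    simp [dxy, hz, h]
  · have hz : z ≠ (⟨n - 1, by omega⟩ : Fin n) := by
      intro hc; exact h (by rw [hc])
    simp [dxy, hz, h, codot]

lemma isDer_dxy {n : ℕ} (hn : 2 ≤ n) (p : Fin n × Fin n) (hyx : p.2.1 ≤ p.1.1) :
    IsChainDer (dxy hn p) := by
  intro a b
  have ha := a.2
  have hb := b.2
  have hp1 := p.1.2
  apply Fin.ext
  rw [val_max]
  have h1 := dxy_val hn p (codot a b)
  have h2 := dxy_val hn p a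
  have h3 := dxy_val hn p b
  have e : (codot a b).1 = a.1 + b.1 - (n - 1) := rfl
  rw [e] at h1
  rw [h1]
  simp only [codot] at h1 h2 h3 ⊢
  rw [h2, h3]
  split_ifs <;> omega

/-- Every derivation on the chain has the form `dxy`. -/
lemma char {n : ℕ} (hn : 2 ≤ n) {d : Fin n → Fin n} (hd : IsChainDer d) :
    ∃ x y : ℕ, 1 ≤ x ∧ x ≤ n - 1 ∧ y ≤ x ∧
      ∀ z : Fin n, (d z).1 = if z.1 = n - 1 then y else x + z.1 - (n - 1) := by
  set D : ℕ → ℕ := fun m => (d ⟨min m (n - 1), by omega⟩).1 with hD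
  have hDd : ∀ z : Fin n, (d z).1 = D z.1 := by
    intro z
    have hz := z.2
    exact congrArg Fin.val (congrArg d (Fin.ext (by simp; omega)))
  have hDle : ∀ m, D m ≤ n - 1 := by
    intro m
    have := (d ⟨min m (n - 1), by omega⟩).2
    simp only [hD]
    omega
  have key' : ∀ a b : ℕ, a ≤ n - 1 → b ≤ n - 1 →
      D (a + b - (n - 1)) = max (D a + b - (n - 1)) (a + D b - (n - 1)) := by
    intro a b ha hb
    have h := hd ⟨a, by omega⟩ ⟨b, by omega⟩
    have h2 := congrArg Fin.val h
    rw [val_max] at h2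
    simpa [codot, hDd] using h2
  have hd0 : D 0 = 0 := by
    have h := key' 0 0 (by omega) (by omega)
    have e : 0 + 0 - (n - 1) = 0 := by omega
    rw [e] at h
    have := hDle 0
    omega
  -- y ≤ c + 1
  have hyc : D (n - 1) ≤ D (n - 1 - 1) + 1 := by
    have h := key' (n - 1) (n - 1 - 1) (le_refl _) (by omega)
    have e : n - 1 + (n - 1 - 1) - (n - 1) = n - 1 - 1 := by omega
    rw [e] at h
    have := hDle (n - 1)
    have := hDle (n - 1 - 1)
    omega
  have claim : ∀ j z, z < n - 1 → n - 1 - 1 - z = j →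
      D z = (D (n - 1 - 1) + 1) + z - (n - 1) := by
    intro j
    induction j with
    | zero =>
      intro z hz he
      have hz2 : z = n - 1 - 1 := by omega
      subst hz2
      omega
    | succ j ih =>
      intro z hz he
      have hih := ih (z + 1) (by omega) (by omega)
      have h := key' (z + 1) (n - 1 - 1) (by omega) (by omega)
      have e : z + 1 + (n - 1 - 1) - (n - 1) = z := by omega
      rw [e] at h
      rw [hih] at h
      have := hDle (n - 1 - 1)
      omega
  have hclt : D (n - 1 - 1) + 1 ≤ n - 1 := by
    rcases eq_or_lt_of_le hn with h2 | h3
    · have e : n - 1 - 1 = 0 := by omega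
      rw [e]
      omega
    · have h := claim (n - 1 - 1 - 0) 0 (by omega) rfl
      omega
  refine ⟨D (n - 1 - 1) + 1, D (n - 1), by omega, hclt, hyc, ?_⟩
  intro z
  rw [hDd]
  rcases eq_or_ne z.1 (n - 1) with h | h
  · simp [h]
  · have hzlt : z.1 < n - 1 := by have := z.2; omega
    have hc := claim (n - 1 - 1 - z.1) z.1 hzlt rfl
    simp [h, hc]

end Stmt18Aux

open Stmt18Aux in
set_option maxHeartbeats 1000000 in
/-- the poset Der(L_n) of (⊙,∨)-derivations on the n-element
MV-chain, ordered pointwise, is order-isomorphic to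
A(L_n) = {(x,y) : y ≤ x} \ {(0,0)} with the componentwise order, via
(x,y) ↦ (d_x)^y; in particular Der(L_n) is a lattice. -/
theorem stmt18 (n : ℕ) (hn : 2 ≤ n) :
    (∃ F : {p : Fin n × Fin n // p.2 ≤ p.1 ∧ ¬(p.1.1 = 0 ∧ p.2.1 = 0)} →
           {d : Fin n → Fin n // IsChainDer d},
      (∀ p, (F p).1 = dxy hn p.1) ∧ Function.Bijective F ∧
        ∀ p q, p ≤ q ↔ F p ≤ F q) ∧
      ∀ d d' : {d : Fin n → Fin n // IsChainDer d},
        (∃ s, IsLUB {d, d'} s) ∧ (∃ s, IsGLB {d, d'} s) := by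
  constructor
  · refine ⟨fun p => ⟨dxy hn p.1, isDer_dxy hn p.1 (Fin.le_def.mp p.2.1)⟩,
      fun p => rfl, ⟨?_, ?_⟩, ?_⟩
    · -- injective
      intro p q h
      have hne : n - 1 - 1 ≠ n - 1 := by omega
      have h1 : p.1.2.1 = q.1.2.1 := by
        have := congrArg (fun f => (f.1 (⟨n - 1, by omega⟩ : Fin n)).1) h
        simpa [dxy_val hn] using this
      have h2 : p.1.1.1 + (n - 1 - 1) - (n - 1) = q.1.1.1 + (n - 1 - 1) - (n - 1) := by
        have := congrArg (fun f => (f.1 (⟨n - 1 - 1, by omega⟩ : Fin n)).1) h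
        simpa [dxy_val hn, hne] using this
      have hxp : 1 ≤ p.1.1.1 := by
        have hyx := Fin.le_def.mp p.2.1
        have := p.2.2
        omega
      have hxq : 1 ≤ q.1.1.1 := by
        have hyx := Fin.le_def.mp q.2.1
        have := q.2.2
        omega
      apply Subtype.ext
      apply Prod.ext <;> apply Fin.ext <;> omega
    · -- surjective
      intro e
      obtain ⟨x, y, hx1, hxk, hyx, hform⟩ := char hn e.2
      refine ⟨⟨(⟨x, by omega⟩, ⟨y, by omega⟩),
        Fin.le_def.mpr (by simpa), by rintro ⟨h1, h2⟩; simp at h1; omega⟩, ?_⟩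
      apply Subtype.ext
      funext z
      show dxy hn ((⟨x, by omega⟩ : Fin n), (⟨y, by omega⟩ : Fin n)) z = e.1 z
      apply Fin.ext
      rw [dxy_val hn, hform z]
    · -- order iff
      intro p q
      constructor
      · intro hpq z
        obtain ⟨hx, hy⟩ := hpq
        have hx' : p.1.1.1 ≤ q.1.1.1 := hx
        have hy' : p.1.2.1 ≤ q.1.2.1 := hy
        show (dxy hn p.1 z).1 ≤ (dxy hn q.1 z).1
        rw [dxy_val hn, dxy_val hn]
        split_ifs <;> omega
      · intro h
        have hne : n - 1 - 1 ≠ n - 1 := by omega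
        have h1 : (dxy hn p.1 (⟨n - 1, by omega⟩ : Fin n)).1
            ≤ (dxy hn q.1 (⟨n - 1, by omega⟩ : Fin n)).1 := h _
        have h2 : (dxy hn p.1 (⟨n - 1 - 1, by omega⟩ : Fin n)).1
            ≤ (dxy hn q.1 (⟨n - 1 - 1, by omega⟩ : Fin n)).1 := h _
        simp only [dxy_val hn] at h1 h2
        simp only [if_true] at h1
        rw [if_neg hne, if_neg hne] at h2
        have hxq : 1 ≤ q.1.1.1 := by
          have hyx : q.1.2.1 ≤ q.1.1.1 := q.2.1
          have := q.2.2
          omega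
        exact ⟨show p.1.1.1 ≤ q.1.1.1 by omega, show p.1.2.1 ≤ q.1.2.1 by omega⟩
  · -- lattice
    intro d d'
    obtain ⟨x, y, hx1, hxk, hyx, hf⟩ := char hn d.2
    obtain ⟨x', y', hx1', hxk', hyx', hf'⟩ := char hn d'.2
    constructor
    · -- sup
      refine ⟨⟨dxy hn (⟨max x x', by omega⟩, ⟨max y y', by omega⟩),
        isDer_dxy hn _ (by show max y y' ≤ max x x'; omega)⟩, ?_, ?_⟩
      · rintro e (rfl | rfl) <;> intro z <;> rw [Fin.le_def, dxy_val hn] <;>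
          [rw [hf z]; rw [hf' z]] <;> dsimp only <;> split_ifs <;> omega
      · intro u hu
        have hd1 : d ≤ u := hu (by left; rfl)
        have hd2 : d' ≤ u := hu (by right; rfl)
        intro z
        rw [Fin.le_def, dxy_val hn]
        dsimp only
        have g1 := Fin.le_def.mp (hd1 z)
        have g2 := Fin.le_def.mp (hd2 z)
        rw [hf z] at g1
        rw [hf' z] at g2
        split_ifs at g1 g2 ⊢ <;> omega
    · -- inf
      refine ⟨⟨dxy hn (⟨min x x', by omega⟩, ⟨min y y', by omega⟩),
        isDer_dxy hn _ (by show min y y' ≤ min x x'; omega)⟩, ?_, ?_⟩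
      · rintro e (rfl | rfl) <;> intro z <;> rw [Fin.le_def, dxy_val hn] <;>
          [rw [hf z]; rw [hf' z]] <;> dsimp only <;> split_ifs <;> omega
      · intro u hu
        have hd1 : u ≤ d := hu (by left; rfl)
        have hd2 : u ≤ d' := hu (by right; rfl)
        intro z
        rw [Fin.le_def, dxy_val hn]
        dsimp only
        have g1 := Fin.le_def.mp (hd1 z)
        have g2 := Fin.le_def.mp (hd2 z)
        rw [hf z] at g1
        rw [hf' z] at g2
        split_ifs at g1 g2 ⊢ <;> omega
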